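/- Let g(L_1,...,L_k) = Σ_{r=1}^R a_r ∏_{i=1}^k f_{r,i}(L_i) be a symmetric function of its k variables, with each f_{r,i} sufficiently differentiable. Then Δ(d/dL)^2 g(L_1,...,L_k) evaluated at L_1 = ... = L_k = L equals k! Σ_{r=1}^R a_r det_{k×k}( f_{r,i}^{(i+j-2)}(L) ). -/

import Mathlib

open Finset

open Finset

/-- Partial derivative in the `i`-th coordinate of a function of `k` complex variables. -/
noncomputable def pderivCoord {k : ℕ} (i : Fin k) (g : (Fin k → ℂ) → ℂ) :
    (Fin k → ℂ) → ℂ :=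
  fun x => deriv (fun t => g (Function.update x i t)) (x i)

/-- Apply the operator `∏ i (∂/∂L_i)^(m i)` to `g`. -/
noncomputable def applyPows {k : ℕ} (m : Fin k → ℕ) (g : (Fin k → ℂ) → ℂ) :
    (Fin k → ℂ) → ℂ :=
  (List.finRange k).foldr (fun i F => (pderivCoord i)^[m i] ∘ F) id g

/-- The Vandermonde differential operator
`Δ(d/dL) = det ((∂/∂L_i)^(j-1)) = ∏_{i<j} (∂/∂L_j - ∂/∂L_i)`. -/
noncomputable def vandermondeOp {k : ℕ} (g : (Fin k → ℂ) → ℂ) : (Fin k → ℂ) → ℂ :=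
  fun x => ∑ σ : Equiv.Perm (Fin k),
    (Equiv.Perm.sign σ : ℤ) • applyPows (fun i => (σ i : ℕ)) g x

section Aux

variable {k : ℕ} {ι : Type*} [Fintype ι]

lemma prod_update_eval (i : Fin k) (g : Fin k → ℂ → ℂ) (x : Fin k → ℂ) (h : ℂ → ℂ) :
    (∏ j, Function.update g i h j (x j)) = h (x i) * ∏ j ∈ univ.erase i, g j (x j) := by
  rw [← Finset.mul_prod_erase univ _ (mem_univ i)]
  simp only [Function.update_self]
  congr 1
  exact Finset.prod_congr rfl fun j hj => by
    rw [Function.update_of_ne (Finset.ne_of_mem_erase hj)]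

lemma prod_updateArg_eval (i : Fin k) (g : Fin k → ℂ → ℂ) (x : Fin k → ℂ) (t : ℂ) :
    (∏ j, g j (Function.update x i t j)) = g i t * ∏ j ∈ univ.erase i, g j (x j) := by
  rw [← Finset.mul_prod_erase univ _ (mem_univ i)]
  simp only [Function.update_self]
  congr 1
  exact Finset.prod_congr rfl fun j hj => by
    rw [Function.update_of_ne (Finset.ne_of_mem_erase hj)]

lemma pderivCoord_sum_prod (i : Fin k)
    (a : ι → ℂ) (f : ι → Fin k → ℂ → ℂ) (hf : ∀ r, Differentiable ℂ (f r i)) :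
    pderivCoord i (fun x => ∑ r, a r * ∏ j, f r j (x j))
    = fun x => ∑ r, a r * ∏ j, Function.update (f r) i (deriv (f r i)) j (x j) := by
  funext x
  simp only [pderivCoord]
  have h1 : (fun t => ∑ r, a r * ∏ j, f r j (Function.update x i t j))
      = fun t => ∑ r, a r * (f r i t * ∏ j ∈ univ.erase i, f r j (x j)) := by
    funext t
    exact Finset.sum_congr rfl fun r _ => by rw [prod_updateArg_eval]
  rw [h1, deriv_fun_sum (fun r _ => (((hf r) (x i)).mul_const _).const_mul _)]
  refine Finset.sum_congr rfl fun r _ => ?_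
  rw [deriv_const_mul _ (((hf r) (x i)).mul_const _), deriv_mul_const ((hf r) (x i)),
    prod_update_eval]

lemma iter_pderivCoord_sum_prod (i : Fin k) (m n : ℕ) (hmn : m ≤ n)
    (a : ι → ℂ) (f : ι → Fin k → ℂ → ℂ) (hf : ∀ r, ContDiff ℂ (n : ℕ) (f r i)) :
    (pderivCoord i)^[m] (fun x => ∑ r, a r * ∏ j, f r j (x j))
    = fun x => ∑ r, a r * ∏ j, Function.update (f r) i (deriv^[m] (f r i)) j (x j) := by
  induction m with
  | zero =>
      simp only [Function.iterate_zero, id_eq, Function.update_eq_self]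
  | succ m ih =>
      have hm : m ≤ n := Nat.le_of_succ_le hmn
      rw [Function.iterate_succ_apply', ih hm]
      have hdiff : ∀ r, Differentiable ℂ (deriv^[m] (f r i)) := by
        intro r
        have hle : (((1 + m : ℕ) : ℕ) : WithTop ℕ∞) ≤ ((n : ℕ) : WithTop ℕ∞) := by
          exact_mod_cast (show 1 + m ≤ n by omega)
        have h1 : ContDiff ℂ ((1 + m : ℕ) : ℕ) (f r i) := (hf r).of_le hle
        exact (ContDiff.iterate_deriv' 1 m h1).differentiable (by simp)
      rw [pderivCoord_sum_prod i a _ (fun r => by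
        simpa only [Function.update_self] using hdiff r)]
      simp only [Function.update_self, Function.update_idem, Function.iterate_succ_apply']

lemma foldr_sum_prod (l : List (Fin k)) (hl : l.Nodup) (m n : Fin k → ℕ)
    (hmn : ∀ i, m i ≤ n i) (a : ι → ℂ) (f : ι → Fin k → ℂ → ℂ)
    (hf : ∀ r i, ContDiff ℂ (n i : ℕ) (f r i)) :
    (l.foldr (fun i F => (pderivCoord i)^[m i] ∘ F) id) (fun x => ∑ r, a r * ∏ j, f r j (x j))
    = fun x => ∑ r, a r * ∏ j, (if j ∈ l then deriv^[m j] (f r j) else f r j) (x j) := by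
  induction l with
  | nil => simp
  | cons i l ih =>
      have hnd : l.Nodup := hl.of_cons
      have hni : i ∉ l := by simpa using hl.notMem
      simp only [List.foldr_cons, Function.comp_apply]
      rw [ih hnd]
      have key := iter_pderivCoord_sum_prod i (m i) (n i) (hmn i) a
        (fun r j => if j ∈ l then deriv^[m j] (f r j) else f r j)
        (fun r => by simp only [if_neg hni]; exact hf r i)
      refine key.trans ?_
      funext x
      refine Finset.sum_congr rfl fun r _ => ?_
      congr 1
      refine Finset.prod_congr rfl fun j _ => ?_
      by_cases hji : j = i
      · subst hji; simp [hni]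
      · rw [Function.update_of_ne hji]
        simp only [List.mem_cons, hji, false_or]

lemma applyPows_sum_prod (m n : Fin k → ℕ) (hmn : ∀ i, m i ≤ n i)
    (a : ι → ℂ) (f : ι → Fin k → ℂ → ℂ)
    (hf : ∀ r i, ContDiff ℂ (n i : ℕ) (f r i)) :
    applyPows m (fun x => ∑ r, a r * ∏ j, f r j (x j))
    = fun x => ∑ r, a r * ∏ j, deriv^[m j] (f r j) (x j) := by
  rw [applyPows, foldr_sum_prod (List.finRange k) (List.nodup_finRange k) m n hmn a f hf]
  simp [List.mem_finRange]

end Aux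

section Main

lemma sym_deriv_eval {k R : ℕ} (a : Fin R → ℂ) (f : Fin R → Fin k → ℂ → ℂ)
    (hf : ∀ r i, ContDiff ℂ ((2 * k - 2 : ℕ)) (f r i))
    (hsym : ∀ σ : Equiv.Perm (Fin k), ∀ x : Fin k → ℂ,
      (∑ r, a r * ∏ i, f r i ((x ∘ σ) i)) = ∑ r, a r * ∏ i, f r i (x i))
    (L : ℂ) (σ : Equiv.Perm (Fin k)) (m : Fin k → ℕ) (hm : ∀ j, m j ≤ 2 * k - 2) :
    ∑ r, a r * ∏ j, deriv^[m j] (f r (σ⁻¹ j)) L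
      = ∑ r, a r * ∏ j, deriv^[m j] (f r j) L := by
  have hfun : (fun x : Fin k → ℂ => ∑ r, a r * ∏ j, f r (σ⁻¹ j) (x j))
      = fun x : Fin k → ℂ => ∑ r, a r * ∏ j, f r j (x j) := by
    funext x
    rw [← hsym σ x]
    refine Finset.sum_congr rfl fun r _ => ?_
    congr 1
    rw [← Equiv.prod_comp σ (fun j => f r (σ⁻¹ j) (x j))]
    refine Finset.prod_congr rfl fun i _ => ?_
    simp [Function.comp]
  have h1 := applyPows_sum_prod m (fun _ => 2 * k - 2) hm a
    (fun r j => f r (σ⁻¹ j)) (fun r j => hf r _)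
  have h2 := applyPows_sum_prod m (fun _ => 2 * k - 2) hm a f (fun r j => hf r j)
  calc ∑ r, a r * ∏ j, deriv^[m j] (f r (σ⁻¹ j)) L
      = applyPows m (fun x => ∑ r, a r * ∏ j, f r (σ⁻¹ j) (x j)) (fun _ => L) :=
        (congrFun h1 _).symm
    _ = applyPows m (fun x => ∑ r, a r * ∏ j, f r j (x j)) (fun _ => L) := by rw [hfun]
    _ = ∑ r, a r * ∏ j, deriv^[m j] (f r j) L := congrFun h2 _

end Main
theorem stmt_6 (k : ℕ) (hk : 1 ≤ k) (R : ℕ) (hR : 1 ≤ R) (a : Fin R → ℂ)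
    (f : Fin R → Fin k → ℂ → ℂ) (hf : ∀ r i, ContDiff ℂ ((2 * k - 2 : ℕ)) (f r i))
    (hsym : ∀ σ : Equiv.Perm (Fin k), ∀ x : Fin k → ℂ,
      (∑ r, a r * ∏ i, f r i ((x ∘ σ) i)) = ∑ r, a r * ∏ i, f r i (x i))
    (L : ℂ) :
    vandermondeOp (vandermondeOp (fun x => ∑ r, a r * ∏ i, f r i (x i))) (fun _ => L)
      = (Nat.factorial k : ℂ) * ∑ r, a r *
          Matrix.det (Matrix.of fun i j : Fin k =>
            iteratedDeriv ((i : ℕ) + (j : ℕ)) (f r i) L) := by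
  classical
  obtain ⟨a', ha'⟩ : ∃ a' : Equiv.Perm (Fin k) × Fin R → ℂ,
      a' = fun p => ((Equiv.Perm.sign p.1 : ℤ) : ℂ) * a p.2 := ⟨_, rfl⟩
  obtain ⟨f', hf'⟩ : ∃ f' : Equiv.Perm (Fin k) × Fin R → Fin k → ℂ → ℂ,
      f' = fun p i => deriv^[(p.1 i : ℕ)] (f p.2 i) := ⟨_, rfl⟩
  -- Step 1 : the inner Vandermonde operator
  have hstep1 : vandermondeOp (fun x => ∑ r, a r * ∏ i, f r i (x i))
      = fun x => ∑ p : Equiv.Perm (Fin k) × Fin R, a' p * ∏ i, f' p i (x i) := by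
    funext x
    rw [vandermondeOp, Fintype.sum_prod_type, ha', hf']
    refine Finset.sum_congr rfl fun σ _ => ?_
    have key := congrFun (applyPows_sum_prod (fun i => (σ i : ℕ)) (fun _ => 2 * k - 2)
      (fun i => by show (σ i : ℕ) ≤ 2 * k - 2; have := (σ i).is_lt; omega) a f (fun r i => hf r i)) x
    rw [key, zsmul_eq_mul, Finset.mul_sum]
    refine Finset.sum_congr rfl fun r _ => ?_
    ring
  -- smoothness of the new family
  have hf'cd : ∀ p i, ContDiff ℂ ((k - 1 : ℕ) : ℕ) (f' p i) := by
    intro p i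
    rw [hf']
    refine ContDiff.iterate_deriv' (k - 1) (p.1 i) ?_
    refine (hf p.2 i).of_le ?_
    have h1 : (k - 1) + (p.1 i : ℕ) ≤ 2 * k - 2 := by have := (p.1 i).is_lt; omega
    exact_mod_cast h1
  -- Step 2 : full expansion of the double operator
  have hstep2 : vandermondeOp (vandermondeOp (fun x => ∑ r, a r * ∏ i, f r i (x i)))
        (fun _ => L)
      = ∑ τ : Equiv.Perm (Fin k), ∑ p : Equiv.Perm (Fin k) × Fin R,
          ((Equiv.Perm.sign τ : ℤ) : ℂ) *
            (a' p * ∏ i, deriv^[(τ i : ℕ)] (f' p i) L) := by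
    rw [vandermondeOp, hstep1]
    refine Finset.sum_congr rfl fun τ _ => ?_
    have key := congrFun (applyPows_sum_prod (fun i => (τ i : ℕ)) (fun _ => k - 1)
      (fun i => by show (τ i : ℕ) ≤ k - 1; have := (τ i).is_lt; omega) a' f' hf'cd) (fun _ => L)
    rw [key, zsmul_eq_mul, Finset.mul_sum]
  rw [hstep2]
  -- Step 3 : the inner sum is independent of τ
  have hinner : ∀ τ : Equiv.Perm (Fin k),
      (∑ p : Equiv.Perm (Fin k) × Fin R,
          ((Equiv.Perm.sign τ : ℤ) : ℂ) *
            (a' p * ∏ i, deriv^[(τ i : ℕ)] (f' p i) L))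
      = ∑ π : Equiv.Perm (Fin k), ((Equiv.Perm.sign π : ℤ) : ℂ) *
          ∑ r, a r * ∏ j : Fin k, deriv^[(j : ℕ) + (π j : ℕ)] (f r j) L := by
    intro τ
    rw [Fintype.sum_prod_type]
    rw [← Equiv.sum_comp (Equiv.mulRight τ)
      (fun σ => ∑ r, ((Equiv.Perm.sign τ : ℤ) : ℂ) *
        (a' (σ, r) * ∏ i, deriv^[(τ i : ℕ)] (f' (σ, r) i) L))]
    refine Finset.sum_congr rfl fun π _ => ?_
    have hsgn : ((Equiv.Perm.sign τ : ℤ) : ℂ) *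
        ((Equiv.Perm.sign (Equiv.mulRight τ π) : ℤ) : ℂ) = ((Equiv.Perm.sign π : ℤ) : ℂ) := by
      have h1 : Equiv.mulRight τ π = π * τ := rfl
      rw [h1, map_mul]
      push_cast
      rcases Int.units_eq_one_or (Equiv.Perm.sign τ) with h | h <;>
        rcases Int.units_eq_one_or (Equiv.Perm.sign π) with h2 | h2 <;>
        simp [h, h2] <;> ring
    have hprod : ∀ r : Fin R,
        (∏ i, deriv^[(τ i : ℕ)] (f' (Equiv.mulRight τ π, r) i) L)
        = ∏ j : Fin k, deriv^[(j : ℕ) + (π j : ℕ)] (f r (τ⁻¹ j)) L := by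
      intro r
      rw [← Equiv.prod_comp τ (fun j => deriv^[(j : ℕ) + (π j : ℕ)] (f r (τ⁻¹ j)) L)]
      refine Finset.prod_congr rfl fun i _ => ?_
      rw [hf']
      have h1 : ((Equiv.mulRight τ π : Equiv.Perm (Fin k)) i : ℕ) = ((π (τ i) : Fin k) : ℕ) := rfl
      have h2 : τ⁻¹ (τ i) = i := by simp
      simp only [h1, h2]
      rw [Function.iterate_add_apply]
    have hsym' := sym_deriv_eval a f hf hsym L τ
      (fun j => (j : ℕ) + (π j : ℕ))
      (fun j => by show (j : ℕ) + (π j : ℕ) ≤ 2 * k - 2; have := j.is_lt; have := (π j).is_lt; omega)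
    calc (∑ r, ((Equiv.Perm.sign τ : ℤ) : ℂ) *
            (a' (Equiv.mulRight τ π, r) * ∏ i, deriv^[(τ i : ℕ)] (f' (Equiv.mulRight τ π, r) i) L))
        = ((Equiv.Perm.sign π : ℤ) : ℂ) *
            ∑ r, a r * ∏ j : Fin k, deriv^[(j : ℕ) + (π j : ℕ)] (f r (τ⁻¹ j)) L := by
          rw [Finset.mul_sum]
          refine Finset.sum_congr rfl fun r _ => ?_
          rw [hprod r, ha']
          simp only
          rw [← hsgn]
          have h1 : (Equiv.mulRight τ π : Equiv.Perm (Fin k)) = π * τ := rfl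
          ring
      _ = ((Equiv.Perm.sign π : ℤ) : ℂ) *
            ∑ r, a r * ∏ j : Fin k, deriv^[(j : ℕ) + (π j : ℕ)] (f r j) L := by rw [hsym']
  rw [Finset.sum_congr rfl fun τ _ => hinner τ]
  rw [Finset.sum_const, Finset.card_univ, Fintype.card_perm, Fintype.card_fin]
  rw [nsmul_eq_mul]
  congr 1
  -- Step 4 : identify with the determinant
  simp only [Finset.mul_sum]
  rw [Finset.sum_comm]
  refine Finset.sum_congr rfl fun r _ => ?_
  rw [← Matrix.det_transpose, Matrix.det_apply', Finset.mul_sum]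
  refine Finset.sum_congr rfl fun π _ => ?_
  simp only [Matrix.transpose_apply, Matrix.of_apply, iteratedDeriv_eq_iterate]
  ring
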